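/- With the non-degenerate polynomial action T_r·f := (t_{r+1} − q t_r)(s̃_r(f) − f)/(t_{r+1} − t_r) + q f and X_k·f := t_k f on K[t_1^{±1},...,t_n^{±1}], the cross relation X_{r+1}∘T_r = T_r∘X_r + (q−1)·X_{r+1} holds as operators, for every 1 ≤ r < n. -/

import Mathlib

/-- With the non-degenerate polynomial action
`T_r·f := (t_{r+1} − q t_r)(s̃_r(f) − f)/(t_{r+1} − t_r) + q f` and `X_k·f := t_k f` on the
Laurent polynomial ring `K[t_1^{±1},…,t_n^{±1}]` (realized as the group algebra of `Fin n →₀ ℤ`),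
the cross relation `X_{r+1}∘T_r = T_r∘X_r + (q−1)·X_{r+1}` holds. -/
theorem stmt6 (K : Type*) [Field K] (q : K) (hq : q ≠ 0) (n : ℕ) (hn : 2 ≤ n)
    (r : ℕ) (hr : r + 1 < n)
    (t : Fin n → AddMonoidAlgebra K (Fin n →₀ ℤ))
    (ht : ∀ k : Fin n, t k = AddMonoidAlgebra.single (Finsupp.single k (1 : ℤ)) (1 : K))
    (σ : AddMonoidAlgebra K (Fin n →₀ ℤ) ≃ₐ[K] AddMonoidAlgebra K (Fin n →₀ ℤ))
    (hσ : ∀ (a : Fin n →₀ ℤ) (c : K),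
      σ (AddMonoidAlgebra.single a c) =
        AddMonoidAlgebra.single
          (Finsupp.equivMapDomain (Equiv.swap (⟨r, Nat.lt_of_succ_lt hr⟩ : Fin n) ⟨r + 1, hr⟩) a) c)
    (T : AddMonoidAlgebra K (Fin n →₀ ℤ) →ₗ[K] AddMonoidAlgebra K (Fin n →₀ ℤ))
    (hT : ∀ f : AddMonoidAlgebra K (Fin n →₀ ℤ),
      (t ⟨r + 1, hr⟩ - t ⟨r, Nat.lt_of_succ_lt hr⟩) * T f =
        (t ⟨r + 1, hr⟩ - q • t ⟨r, Nat.lt_of_succ_lt hr⟩) * (σ f - f) +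
          q • (f * (t ⟨r + 1, hr⟩ - t ⟨r, Nat.lt_of_succ_lt hr⟩))) :
    ∀ f : AddMonoidAlgebra K (Fin n →₀ ℤ),
      t ⟨r + 1, hr⟩ * T f =
        T (t ⟨r, Nat.lt_of_succ_lt hr⟩ * f) + (q - 1) • (t ⟨r + 1, hr⟩ * f) := by
  intro f
  set i : Fin n := ⟨r, Nat.lt_of_succ_lt hr⟩ with hi
  set j : Fin n := ⟨r + 1, hr⟩ with hj
  have hij : i ≠ j := by simp [hi, hj, Fin.ext_iff]
  set a := t i with ha
  set b := t j with hb
  have hd : b - a ≠ 0 := by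
    rw [ha, hb, ht, ht]
    intro h
    have h2 := congrArg (fun p => p.coeff (Finsupp.single j (1 : ℤ))) h
    simp only [AddMonoidAlgebra.coeff_sub, AddMonoidAlgebra.coeff_single] at h2
    rw [Finsupp.sub_apply, Finsupp.single_eq_same, Finsupp.single_eq_of_ne] at h2
    · simpa using h2
    · intro hcon
      exact hij ((Finsupp.single_left_inj one_ne_zero).mp hcon.symm)
  have hσa : σ a = b := by
    rw [ha, hb, ht, ht, hσ]
    congr 1
    rw [Finsupp.equivMapDomain_single, Equiv.swap_apply_left]
  have h3 : σ (a * f) = b * σ f := by rw [map_mul, hσa]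
  have key : (b - a) * (b * T f) = (b - a) * (T (a * f) + (q - 1) • (b * f)) := by
    have h1 := hT f
    have h2 := hT (a * f)
    rw [h3] at h2
    have e1 : (b - a) * (b * T f) = b * ((b - a) * T f) := by ring
    have e2 : (b - a) * (T (a * f) + (q - 1) • (b * f)) =
        (b - a) * T (a * f) + (b - a) * ((q - 1) • (b * f)) := by ring
    rw [e1, h1, e2, h2]
    simp only [Algebra.smul_def, map_sub, map_one]
    ring
  exact mul_left_cancel₀ hd key
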